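/- Let V be a finite-dimensional real inner product space and let ρ : [0,∞) → ℝ be continuously differentiable with ρ(s) + 2s·ρ′(s) ≥ κ₁ for all s ≥ 0, where κ₁ > 0. Then the map a ↦ ρ(‖a‖²)·a is strongly monotone: for all a, b ∈ V, ⟨ρ(‖a‖²)·a − ρ(‖b‖²)·b, a − b⟩ ≥ κ₁·‖a − b‖². -/

import Mathlib

open scoped RealInnerProductSpace

/-- Strong monotonicity of `a ↦ ρ(‖a‖²)·a` on a finite-dimensional real
inner product space, under the lower uniform ellipticity bound
`ρ(s) + 2s·ρ′(s) ≥ κ₁ > 0`. -/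
theorem stmt_12 (V : Type*) [NormedAddCommGroup V] [InnerProductSpace ℝ V]
    [FiniteDimensional ℝ V]
    (ρ ρ' : ℝ → ℝ) (κ₁ : ℝ) (hκ : 0 < κ₁)
    (hder : ∀ s ∈ Set.Ici (0:ℝ), HasDerivWithinAt ρ (ρ' s) (Set.Ici (0:ℝ)) s)
    (hcont : ContinuousOn ρ' (Set.Ici (0:ℝ)))
    (h : ∀ s ∈ Set.Ici (0:ℝ), κ₁ ≤ ρ s + 2 * s * ρ' s) :
    ∀ a b : V, κ₁ * ‖a - b‖ ^ 2 ≤ ⟪ρ (‖a‖ ^ 2) • a - ρ (‖b‖ ^ 2) • b, a - b⟫ := by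
  -- continuity of ρ on [0,∞)
  have hρc : ContinuousOn ρ (Set.Ici 0) := fun s hs => (hder s hs).continuousWithinAt
  -- Step 1: ρ s ≥ κ₁ on [0,∞)
  have key : ∀ s : ℝ, 0 ≤ s → κ₁ ≤ ρ s := by
    intro s hs
    rcases eq_or_lt_of_le hs with rfl | hs
    · simpa using h 0 (Set.mem_Ici.mpr le_rfl)
    · -- f u = ρ(u²)·u − κ₁·u is monotone on [0,∞)
      set f : ℝ → ℝ := fun u => ρ (u ^ 2) * u - κ₁ * u with hf
      have hderf : ∀ u : ℝ, 0 < u →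
          HasDerivAt f (ρ' (u ^ 2) * (2 * u) * u + ρ (u ^ 2) * 1 - κ₁ * 1) u := by
        intro u hu
        have hsq : HasDerivAt (fun u : ℝ => u ^ 2) (2 * u) u := by
          simpa [mul_comm] using (hasDerivAt_pow 2 u)
        have h1 : HasDerivAt (fun u : ℝ => ρ (u ^ 2)) (ρ' (u ^ 2) * (2 * u)) u := by
          have := (hder (u ^ 2) (Set.mem_Ici.mpr (by positivity))).scomp_hasDerivAt_of_eq u hsq
            (fun x => Set.mem_Ici.mpr (sq_nonneg x)) rfl
          exact this.congr_deriv (by rw [smul_eq_mul, mul_comm])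
        exact (h1.mul (hasDerivAt_id u)).sub ((hasDerivAt_id u).const_mul κ₁)
      have hmono : MonotoneOn f (Set.Ici 0) := by
        apply monotoneOn_of_deriv_nonneg (convex_Ici 0)
        · have : ContinuousOn (fun u : ℝ => ρ (u ^ 2)) (Set.Ici 0) := by
            apply hρc.comp (continuous_pow 2).continuousOn
            intro u _; exact sq_nonneg u
          exact (this.mul continuousOn_id).sub (continuousOn_const.mul continuousOn_id)
        · intro u hu
          rw [interior_Ici] at hu
          exact (hderf u hu).differentiableAt.differentiableWithinAt
        · intro u hu
          rw [interior_Ici] at hu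
          rw [(hderf u hu).deriv]
          have := h (u ^ 2) (Set.mem_Ici.mpr (by positivity))
          nlinarith
      have h0 : (0:ℝ) ∈ Set.Ici (0:ℝ) := Set.mem_Ici.mpr le_rfl
      have hs' : Real.sqrt s ∈ Set.Ici (0:ℝ) := Set.mem_Ici.mpr (Real.sqrt_nonneg s)
      have := hmono h0 hs' (Real.sqrt_nonneg s)
      have hsq : Real.sqrt s ^ 2 = s := Real.sq_sqrt hs.le
      have hpos : 0 < Real.sqrt s := Real.sqrt_pos.mpr hs
      simp only [hf, hsq, mul_zero, sub_zero, zero_sub, neg_nonpos] at this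
      have : κ₁ * Real.sqrt s ≤ ρ s * Real.sqrt s := by nlinarith
      exact le_of_mul_le_mul_right (by nlinarith) hpos
  -- Step 2: pointwise inequality
  have ineq : ∀ s p q : ℝ, 0 ≤ s → 0 ≤ q → p ^ 2 ≤ s * q →
      κ₁ * q ≤ ρ s * q + 2 * ρ' s * p ^ 2 := by
    intro s p q hs hq hpq
    rcases le_or_gt 0 (ρ' s) with hρ' | hρ'
    · nlinarith [key s hs, sq_nonneg p]
    · nlinarith [h s hs]
  intro a b
  set d : V := a - b with hd
  set c : ℝ → V := fun t => b + t • d with hc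
  set n : ℝ → ℝ := fun t => ⟪c t, c t⟫ with hn
  set G : ℝ → ℝ := fun t => ρ (n t) * ⟪c t, d⟫ - κ₁ * ⟪d, d⟫ * t with hG
  have hcder : ∀ t : ℝ, HasDerivAt c d t := by
    intro t
    exact (((hasDerivAt_id t).smul_const d).const_add b).congr_deriv (by simp)
  have hipder : ∀ t : ℝ, HasDerivAt (fun t => ⟪c t, d⟫) ⟪d, d⟫ t := by
    intro t
    have := (hcder t).inner ℝ (hasDerivAt_const t d)
    simpa using this
  have hnder : ∀ t : ℝ, HasDerivAt n (2 * ⟪c t, d⟫) t := by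
    intro t
    have := (hcder t).inner ℝ (hcder t)
    exact this.congr_deriv (by rw [real_inner_comm d (c t)]; ring)
  have hnnonneg : ∀ t : ℝ, 0 ≤ n t := fun t => real_inner_self_nonneg
  have hGder : ∀ t : ℝ,
      HasDerivAt G ((2 * ⟪c t, d⟫) * ρ' (n t) * ⟪c t, d⟫ + ρ (n t) * ⟪d, d⟫ - κ₁ * ⟪d, d⟫) t := by
    intro t
    have hρn : HasDerivAt (ρ ∘ n) ((2 * ⟪c t, d⟫) • ρ' (n t)) t :=
      (hder (n t) (hnnonneg t)).scomp_hasDerivAt t (hnder t) hnnonneg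
    have := ((hρn.mul (hipder t)).sub (((hasDerivAt_id t).const_mul (κ₁ * ⟪d, d⟫))))
    exact this.congr_deriv (by simp [smul_eq_mul])
  have hGmono : Monotone G := by
    apply monotone_of_deriv_nonneg (fun t => (hGder t).differentiableAt)
    intro t
    rw [(hGder t).deriv]
    have hCS : ⟪c t, d⟫ ^ 2 ≤ n t * ⟪d, d⟫ := by
      have := real_inner_mul_inner_self_le (c t) d
      nlinarith [this]
    have := ineq (n t) ⟪c t, d⟫ ⟪d, d⟫ (hnnonneg t) real_inner_self_nonneg hCS
    nlinarith [this]
  have hmain := hGmono (show (0:ℝ) ≤ 1 by norm_num)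
  have hc1 : c 1 = a := by simp [hc, hd]
  have hc0 : c 0 = b := by simp [hc]
  have hn1 : n 1 = ‖a‖ ^ 2 := by rw [hn]; simp only [hc1]; exact real_inner_self_eq_norm_sq a
  have hn0 : n 0 = ‖b‖ ^ 2 := by rw [hn]; simp only [hc0]; exact real_inner_self_eq_norm_sq b
  have hdd : (⟪d, d⟫ : ℝ) = ‖d‖ ^ 2 := real_inner_self_eq_norm_sq d
  simp only [hG, hn1, hn0, hc1, hc0, mul_one, mul_zero, sub_zero] at hmain
  rw [inner_sub_left, real_inner_smul_left, real_inner_smul_left, ← hdd]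
  linarith
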